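/- Let H be a complex inner product space, let q be a real number with -1 < q < 1, let e_1,…,e_n, e be unit vectors of H, and let m be a natural number. Let w be the (n+m)-tuple (e_1,…,e_n,e,…,e) ending with m copies of e. Then Q(w,w) ≤ C_q^n · [m]_q!, where Q is the q-form on (n+m)-tuples. -/

import Mathlib

open scoped ComplexOrder

/-- The `q`-integer `[n]_q = ∑_{i=0}^{n-1} q^i`. -/
noncomputable def qInt (q : ℝ) (n : ℕ) : ℝ := ∑ i ∈ Finset.range n, q ^ i

/-- The `q`-factorial `[n]_q! = ∏_{k=1}^{n} [k]_q`, with `[0]_q! = 1`. -/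
noncomputable def qFact (q : ℝ) (n : ℕ) : ℝ := ∏ k ∈ Finset.range n, qInt q (k + 1)

/-- The number of inversions of a permutation `σ` of `{0, …, n-1}`:
the number of pairs `(i, j)` with `i < j` and `σ j < σ i`. -/
def inversions {n : ℕ} (σ : Equiv.Perm (Fin n)) : ℕ :=
  (Finset.univ.filter fun p : Fin n × Fin n => p.1 < p.2 ∧ σ p.2 < σ p.1).card

/-- The `q`-form `Q(v, w) = ∑_{σ ∈ S_n} q^{inv σ} ∏_i ⟨v_i, w_{σ(i)}⟩` on `n`-tuples of vectors
of a complex inner product space. -/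
noncomputable def qForm {H : Type*} [NormedAddCommGroup H] [InnerProductSpace ℂ H]
    (q : ℝ) {n : ℕ} (v w : Fin n → H) : ℂ :=
  ∑ σ : Equiv.Perm (Fin n), (q : ℂ) ^ inversions σ * ∏ i, (inner ℂ (v i) (w (σ i)) : ℂ)

/-- The constant `C_q = ∏_{i=1}^∞ (1 - |q|^i)⁻¹`. -/
noncomputable def Cq (q : ℝ) : ℝ := ∏' i : ℕ, (1 - |q| ^ (i + 1))⁻¹

namespace QFormAux

open Equiv Finset

variable {n m : ℕ}

/-! ### Combinatorics of inversions -/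

def embPerm (n m : ℕ) (τ : Equiv.Perm (Fin m)) : Equiv.Perm (Fin (n + m)) :=
  (finSumFinEquiv (m := n) (n := m)).permCongr (Equiv.sumCongr (Equiv.refl (Fin n)) τ)

@[simp] lemma embPerm_castAdd (τ : Equiv.Perm (Fin m)) (i : Fin n) :
    embPerm n m τ (Fin.castAdd m i) = Fin.castAdd m i := by
  simp [embPerm, Equiv.permCongr_apply, ← finSumFinEquiv_apply_left]

@[simp] lemma embPerm_natAdd (τ : Equiv.Perm (Fin m)) (i : Fin m) :
    embPerm n m τ (Fin.natAdd n i) = Fin.natAdd n (τ i) := by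
  simp [embPerm, Equiv.permCongr_apply, ← finSumFinEquiv_apply_right]

lemma embPerm_mul (τ₁ τ₂ : Equiv.Perm (Fin m)) :
    embPerm n m τ₁ * embPerm n m τ₂ = embPerm n m (τ₁ * τ₂) := by
  apply Equiv.ext; intro i
  induction i using Fin.addCases with
  | left i => simp [Equiv.Perm.mul_apply]
  | right i => simp [Equiv.Perm.mul_apply]

lemma embPerm_one : embPerm n m (1 : Equiv.Perm (Fin m)) = 1 := by
  apply Equiv.ext; intro i
  induction i using Fin.addCases with
  | left i => simp
  | right i => simp

@[simp] lemma embPerm_inv (τ : Equiv.Perm (Fin m)) :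
    (embPerm n m τ)⁻¹ = embPerm n m τ⁻¹ :=
  inv_eq_of_mul_eq_one_right (by rw [embPerm_mul, mul_inv_cancel, embPerm_one])

lemma inversions_eq {M : ℕ} (σ : Equiv.Perm (Fin M)) :
    inversions σ = ∑ a : Fin M, ∑ b : Fin M, (if a < b ∧ σ b < σ a then 1 else 0) := by
  rw [inversions, Finset.card_filter, Fintype.sum_prod_type]

lemma inversions_inv {M : ℕ} (ρ : Equiv.Perm (Fin M)) : inversions ρ⁻¹ = inversions ρ := by
  rw [inversions, inversions]
  apply Finset.card_nbij' (i := fun p => (ρ⁻¹ p.2, ρ⁻¹ p.1)) (j := fun p => (ρ p.2, ρ p.1))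
  · intro p hp
    rw [Finset.mem_coe, Finset.mem_filter] at hp ⊢
    obtain ⟨-, h1, h2⟩ := hp
    refine ⟨Finset.mem_univ _, h2, ?_⟩
    simpa using h1
  · intro p hp
    rw [Finset.mem_coe, Finset.mem_filter] at hp ⊢
    obtain ⟨-, h1, h2⟩ := hp
    refine ⟨Finset.mem_univ _, h2, ?_⟩
    simpa using h1
  · intro p _; simp
  · intro p _; simp

lemma inversions_split (ρ : Equiv.Perm (Fin (n + m))) :
    inversions ρ =
      ((∑ i : Fin n, ∑ j : Fin n,
          if Fin.castAdd m i < Fin.castAdd m j ∧ ρ (Fin.castAdd m j) < ρ (Fin.castAdd m i)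
            then 1 else 0) +
        ∑ i : Fin n, ∑ j : Fin m,
          if ρ (Fin.natAdd n j) < ρ (Fin.castAdd m i) then 1 else 0) +
      ∑ i : Fin m, ∑ j : Fin m,
        if Fin.natAdd n i < Fin.natAdd n j ∧ ρ (Fin.natAdd n j) < ρ (Fin.natAdd n i) then 1 else 0 := by
  rw [inversions_eq, Fin.sum_univ_add]
  congr 1
  · rw [← Finset.sum_add_distrib]
    apply Finset.sum_congr rfl; intro i _
    rw [Fin.sum_univ_add]
    congr 1
    apply Finset.sum_congr rfl; intro j _
    have : Fin.castAdd m i < Fin.natAdd n j := by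
      simp [Fin.lt_def]; omega
    simp [this]
  · apply Finset.sum_congr rfl; intro i _
    rw [Fin.sum_univ_add]
    have : ∀ j : Fin n, ¬ (Fin.natAdd n i < Fin.castAdd m j) := by
      intro j; simp [Fin.lt_def]; omega
    simp [this]

lemma inversions_mul_emb (σ : Equiv.Perm (Fin (n + m)))
    (hσ : StrictMono fun i : Fin m => σ (Fin.natAdd n i)) (τ : Equiv.Perm (Fin m)) :
    inversions (σ * embPerm n m τ) = inversions σ + inversions τ := by
  have hlt : ∀ i j : Fin m, σ (Fin.natAdd n i) < σ (Fin.natAdd n j) ↔ i < j :=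
    fun i j => hσ.lt_iff_lt
  rw [inversions_split σ, inversions_split (σ * embPerm n m τ)]
  have Q22σ : (∑ i : Fin m, ∑ j : Fin m,
      if Fin.natAdd n i < Fin.natAdd n j ∧ σ (Fin.natAdd n j) < σ (Fin.natAdd n i) then 1 else 0) = 0 := by
    apply Finset.sum_eq_zero; intro i _
    apply Finset.sum_eq_zero; intro j _
    rw [if_neg]
    rintro ⟨h1, h2⟩
    rw [hlt] at h2
    rw [Fin.lt_def] at h1 h2
    simp only [Fin.coe_natAdd] at h1
    omega
  have Q22τ : (∑ i : Fin m, ∑ j : Fin m,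
      if Fin.natAdd n i < Fin.natAdd n j ∧
        (σ * embPerm n m τ) (Fin.natAdd n j) < (σ * embPerm n m τ) (Fin.natAdd n i) then 1 else 0)
      = inversions τ := by
    rw [inversions_eq τ]
    apply Finset.sum_congr rfl; intro i _
    apply Finset.sum_congr rfl; intro j _
    congr 1
    rw [eq_iff_iff]
    constructor
    · rintro ⟨h1, h2⟩
      simp only [Equiv.Perm.mul_apply, embPerm_natAdd, hlt] at h2
      simp only [Fin.lt_def, Fin.coe_natAdd] at h1
      exact ⟨by rw [Fin.lt_def]; exact Nat.lt_of_add_lt_add_left h1, h2⟩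
    · rintro ⟨h1, h2⟩
      rw [Fin.lt_def] at h1
      refine ⟨by rw [Fin.lt_def]; simp only [Fin.coe_natAdd]; omega, ?_⟩
      simp only [Equiv.Perm.mul_apply, embPerm_natAdd, hlt]
      exact h2
  have Q12 : (∑ i : Fin n, ∑ j : Fin m,
      if (σ * embPerm n m τ) (Fin.natAdd n j) < (σ * embPerm n m τ) (Fin.castAdd m i) then 1 else 0)
      = ∑ i : Fin n, ∑ j : Fin m, if σ (Fin.natAdd n j) < σ (Fin.castAdd m i) then 1 else 0 := by
    apply Finset.sum_congr rfl; intro i _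
    simp only [Equiv.Perm.mul_apply, embPerm_natAdd, embPerm_castAdd]
    exact Equiv.sum_comp τ (fun j => if σ (Fin.natAdd n j) < σ (Fin.castAdd m i) then 1 else 0)
  have Q11 : (∑ i : Fin n, ∑ j : Fin n,
      if Fin.castAdd m i < Fin.castAdd m j ∧
        (σ * embPerm n m τ) (Fin.castAdd m j) < (σ * embPerm n m τ) (Fin.castAdd m i) then 1 else 0)
      = ∑ i : Fin n, ∑ j : Fin n,
      if Fin.castAdd m i < Fin.castAdd m j ∧ σ (Fin.castAdd m j) < σ (Fin.castAdd m i) then 1 else 0 := by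
    simp only [Equiv.Perm.mul_apply, embPerm_castAdd]
  rw [Q11, Q12, Q22σ, Q22τ, add_zero]

/-! ### Coset decomposition -/

def reps (n m : ℕ) : Finset (Equiv.Perm (Fin (n + m))) :=
  Finset.univ.filter fun σ => StrictMono fun i : Fin m => σ (Fin.natAdd n i)

lemma mem_reps_iff (σ : Equiv.Perm (Fin (n + m))) :
    σ ∈ reps n m ↔ StrictMono fun i : Fin m => σ (Fin.natAdd n i) := by
  rw [reps, Finset.mem_filter]
  simp

noncomputable def lastSort (ρ : Equiv.Perm (Fin (n + m))) : Equiv.Perm (Fin m) :=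
  (Tuple.sort fun i : Fin m => ρ (Fin.natAdd n i))⁻¹

lemma natAdd_strictMono : StrictMono (Fin.natAdd n (m := m)) := by
  intro i j h
  rw [Fin.lt_def] at h ⊢
  simp only [Fin.coe_natAdd]
  omega

lemma sum_perm_decompose {R : Type*} [AddCommMonoid R] (g : Equiv.Perm (Fin (n + m)) → R) :
    ∑ ρ : Equiv.Perm (Fin (n + m)), g ρ =
      ∑ p ∈ (reps n m) ×ˢ (Finset.univ : Finset (Equiv.Perm (Fin m))),
        g (p.1 * embPerm n m p.2) := by
  symm
  apply Finset.sum_nbij' (i := fun p => p.1 * embPerm n m p.2)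
    (j := fun ρ => (ρ * (embPerm n m (lastSort ρ))⁻¹, lastSort ρ))
  · intro p _; exact Finset.mem_univ _
  · intro ρ _
    rw [Finset.mem_product]
    refine ⟨?_, Finset.mem_univ _⟩
    rw [reps, Finset.mem_filter]
    refine ⟨Finset.mem_univ _, ?_⟩
    have h1 : ∀ i : Fin m, (ρ * (embPerm n m (lastSort ρ))⁻¹) (Fin.natAdd n i)
        = ρ (Fin.natAdd n ((Tuple.sort fun i : Fin m => ρ (Fin.natAdd n i)) i)) := by
      intro i
      simp [lastSort, Equiv.Perm.mul_apply]
    simp only [h1]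
    have hmono := Tuple.monotone_sort (fun i : Fin m => ρ (Fin.natAdd n i))
    have hinj : Function.Injective ((fun i : Fin m => ρ (Fin.natAdd n i)) ∘
        (Tuple.sort fun i : Fin m => ρ (Fin.natAdd n i))) := by
      apply Function.Injective.comp
      · exact ρ.injective.comp (natAdd_strictMono.injective)
      · exact (Tuple.sort _).injective
    exact hmono.strictMono_of_injective hinj
  · intro p hp
    rw [Finset.mem_product, reps, Finset.mem_filter] at hp
    obtain ⟨⟨-, hmono⟩, -⟩ := hp
    have hsort : lastSort (p.1 * embPerm n m p.2) = p.2 := by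
      rw [lastSort]
      have : (Tuple.sort fun i : Fin m => (p.1 * embPerm n m p.2) (Fin.natAdd n i)) = p.2⁻¹ := by
        symm
        rw [Tuple.eq_sort_iff]
        constructor
        · intro i j hij
          simp only [Function.comp_apply, Equiv.Perm.mul_apply, embPerm_natAdd,
            Equiv.Perm.coe_inv, Equiv.apply_symm_apply]
          exact hmono.monotone hij
        · intro i j hij heq
          exfalso
          simp only [Equiv.Perm.mul_apply, embPerm_natAdd, Equiv.Perm.coe_inv, Equiv.apply_symm_apply] at heq
          exact absurd (natAdd_strictMono.injective (p.1.injective heq)) hij.ne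
      rw [this, inv_inv]
    rw [hsort]
    have : p.1 * embPerm n m p.2 * (embPerm n m p.2)⁻¹ = p.1 := by group
    rw [this]
  · intro ρ _
    exact inv_mul_cancel_right ρ (embPerm n m (lastSort ρ))
  · intro p _; rfl

/-- Lemma A -/
lemma sum_pow_mul_decompose {R : Type*} [CommSemiring R] (c : R)
    (P : Equiv.Perm (Fin (n + m)) → R)
    (hP : ∀ ρ τ, P (ρ * embPerm n m τ) = P ρ) :
    ∑ ρ : Equiv.Perm (Fin (n + m)), c ^ inversions ρ * P ρ =
      (∑ τ : Equiv.Perm (Fin m), c ^ inversions τ) *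
        ∑ σ ∈ reps n m, c ^ inversions σ * P σ := by
  rw [sum_perm_decompose (fun ρ => c ^ inversions ρ * P ρ), Finset.sum_product]
  trans (∑ σ ∈ reps n m, (∑ τ : Equiv.Perm (Fin m), c ^ inversions τ) * (c ^ inversions σ * P σ))
  · apply Finset.sum_congr rfl
    intro σ hσ
    rw [mem_reps_iff] at hσ
    rw [Finset.sum_mul]
    apply Finset.sum_congr rfl
    intro τ _
    rw [inversions_mul_emb σ hσ τ, hP, pow_add]
    ring
  · rw [← Finset.mul_sum]

/-! ### The case `n = 1` and the generating function identity -/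

lemma card_reps_one (N : ℕ) : (reps 1 N).card = 1 + N := by
  have h := sum_perm_decompose (n := 1) (m := N) (R := ℕ) (fun _ => 1)
  simp only [Finset.sum_const, smul_eq_mul, mul_one, Finset.card_univ, Finset.card_product] at h
  rw [Fintype.card_perm, Fintype.card_perm, Fintype.card_fin, Fintype.card_fin] at h
  have h2 : (1 + N).factorial = (1 + N) * N.factorial := by
    rw [Nat.add_comm, Nat.factorial_succ, Nat.add_comm]
  rw [h2] at h
  exact (Nat.eq_of_mul_eq_mul_right (Nat.factorial_pos N) h.symm)

lemma range_natAdd_comp {N : ℕ} (σ : Equiv.Perm (Fin (1 + N))) :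
    Set.range (fun j : Fin N => σ (Fin.natAdd 1 j)) = {σ (Fin.castAdd N 0)}ᶜ := by
  ext y
  constructor
  · rintro ⟨j, rfl⟩
    simp only [Set.mem_compl_iff, Set.mem_singleton_iff]
    intro h
    have := σ.injective h
    have : (Fin.natAdd 1 j).val = (Fin.castAdd N (0 : Fin 1)).val := by rw [this]
    simp at this
  · intro hy
    simp only [Set.mem_compl_iff, Set.mem_singleton_iff] at hy
    set z := σ.symm y with hz
    have hzy : σ z = y := σ.apply_symm_apply y
    have hzne : z ≠ Fin.castAdd N 0 := by
      intro h
      apply hy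
      rw [← hzy, h]
    have hzv : z.val ≠ 0 := by
      intro h
      exact hzne (Fin.ext (by simp [h]))
    have hlt := z.isLt
    refine ⟨⟨z.val - 1, by omega⟩, ?_⟩
    have : Fin.natAdd 1 (⟨z.val - 1, by omega⟩ : Fin N) = z := by
      apply Fin.ext
      simp only [Fin.coe_natAdd]
      omega
    show σ (Fin.natAdd 1 _) = y
    rw [this, hzy]

lemma inversions_reps_one {N : ℕ} (σ : Equiv.Perm (Fin (1 + N))) (hσ : σ ∈ reps 1 N) :
    inversions σ = (σ (Fin.castAdd N 0)).val := by
  rw [mem_reps_iff] at hσ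
  rw [inversions_split]
  have Q11 : (∑ i : Fin 1, ∑ j : Fin 1,
      if Fin.castAdd N i < Fin.castAdd N j ∧ σ (Fin.castAdd N j) < σ (Fin.castAdd N i)
        then 1 else 0) = 0 := by
    rw [Fin.sum_univ_one, Fin.sum_univ_one, if_neg]
    rintro ⟨h, -⟩
    exact lt_irrefl _ h
  have Q22 : (∑ i : Fin N, ∑ j : Fin N,
      if Fin.natAdd 1 i < Fin.natAdd 1 j ∧ σ (Fin.natAdd 1 j) < σ (Fin.natAdd 1 i)
        then 1 else 0) = 0 := by
    apply Finset.sum_eq_zero; intro i _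
    apply Finset.sum_eq_zero; intro j _
    rw [if_neg]
    rintro ⟨h1, h2⟩
    have := hσ.lt_iff_lt.mp h2
    have h1' := natAdd_strictMono.lt_iff_lt.mp h1
    exact absurd h1' (asymm this)
  rw [Q11, Q22, Fin.sum_univ_one, zero_add, add_zero]
  rw [Finset.sum_boole]
  set k := σ (Fin.castAdd N (0 : Fin 1)) with hk
  rw [Nat.cast_id]
  have : (Finset.univ.filter fun j : Fin N => σ (Fin.natAdd 1 j) < k).card
      = (Finset.Iio k).card := by
    apply Finset.card_bij (fun j _ => σ (Fin.natAdd 1 j))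
    · intro j hj
      rw [Finset.mem_filter] at hj
      exact Finset.mem_Iio.mpr hj.2
    · intro a ha b hb hab
      exact natAdd_strictMono.injective (σ.injective hab)
    · intro y hy
      rw [Finset.mem_Iio] at hy
      have hy' : y ∈ ({k}ᶜ : Set (Fin (1 + N))) := by
        simp only [Set.mem_compl_iff, Set.mem_singleton_iff]
        exact ne_of_lt hy
      rw [← range_natAdd_comp σ] at hy'
      obtain ⟨j, hj⟩ := hy'
      have hj' : σ (Fin.natAdd 1 j) = y := hj
      exact ⟨j, Finset.mem_filter.mpr ⟨Finset.mem_univ _, lt_of_eq_of_lt hj' hy⟩, hj'⟩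
  rw [this, Fin.card_Iio]

lemma reps_one_injOn {N : ℕ} :
    Set.InjOn (fun σ : Equiv.Perm (Fin (1 + N)) => σ (Fin.castAdd N 0)) (reps 1 N) := by
  intro σ hσ σ' hσ' h
  rw [Finset.mem_coe, mem_reps_iff] at hσ hσ'
  have hr : Set.range (fun j : Fin N => σ (Fin.natAdd 1 j))
      = Set.range (fun j : Fin N => σ' (Fin.natAdd 1 j)) := by
    rw [range_natAdd_comp, range_natAdd_comp]
    simp only at h
    rw [h]
  have heq : (fun j : Fin N => σ (Fin.natAdd 1 j)) = fun j : Fin N => σ' (Fin.natAdd 1 j) := by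
    have : WellFoundedLT (Fin N) := inferInstance
    exact (StrictMono.range_inj hσ hσ').mp hr
  apply Equiv.ext
  intro z
  have hzv := z.isLt
  by_cases hz : z.val = 0
  · have : z = Fin.castAdd N 0 := Fin.ext (by simpa using hz)
    rw [this]
    exact h
  · have : z = Fin.natAdd 1 (⟨z.val - 1, by omega⟩ : Fin N) := Fin.ext (by
      simp only [Fin.coe_natAdd]; omega)
    rw [this]
    exact congrFun heq _

lemma reps_one_sum {N : ℕ} {R : Type*} [CommSemiring R] (c : R) :
    ∑ σ ∈ reps 1 N, c ^ inversions σ = ∑ k ∈ Finset.range (1 + N), c ^ k := by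
  have himg : (reps 1 N).image (fun σ => σ (Fin.castAdd N 0)) = Finset.univ := by
    apply Finset.eq_univ_of_card
    rw [Finset.card_image_of_injOn reps_one_injOn, card_reps_one, Fintype.card_fin]
  calc ∑ σ ∈ reps 1 N, c ^ inversions σ
      = ∑ σ ∈ reps 1 N, c ^ (σ (Fin.castAdd N 0)).val := by
        apply Finset.sum_congr rfl
        intro σ hσ
        rw [inversions_reps_one σ hσ]
    _ = ∑ k ∈ (reps 1 N).image (fun σ => σ (Fin.castAdd N 0)), c ^ k.val := by
        rw [Finset.sum_image
          (fun a ha b hb hab => reps_one_injOn (Finset.mem_coe.mpr ha) (Finset.mem_coe.mpr hb) hab)]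
    _ = ∑ k : Fin (1 + N), c ^ k.val := by rw [himg]
    _ = ∑ k ∈ Finset.range (1 + N), c ^ k := Fin.sum_univ_eq_sum_range _ _

/-- Lemma B: the generating function of inversions is the q-factorial. -/
lemma sum_pow_inversions {R : Type*} [CommSemiring R] (c : R) (M : ℕ) :
    ∑ τ : Equiv.Perm (Fin M), c ^ inversions τ
      = ∏ k ∈ Finset.range M, ∑ i ∈ Finset.range (k + 1), c ^ i := by
  induction M with
  | zero =>
    rw [Finset.range_zero, Finset.prod_empty]
    have h0 : ∀ τ : Equiv.Perm (Fin 0), inversions τ = 0 := by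
      intro τ
      rw [inversions]
      apply Finset.card_eq_zero.mpr
      apply Finset.eq_empty_of_isEmpty
    rw [Fintype.sum_congr _ _ (fun τ => by rw [h0 τ, pow_zero])]
    simp
  | succ N ih =>
    have key := sum_pow_mul_decompose (n := 1) (m := N) c (fun _ => (1 : R)) (fun _ _ => rfl)
    simp only [mul_one] at key
    have hcast : ∑ ρ : Equiv.Perm (Fin (N + 1)), c ^ inversions ρ
        = ∑ ρ : Equiv.Perm (Fin (1 + N)), c ^ inversions ρ :=
      congrArg (fun M => ∑ ρ : Equiv.Perm (Fin M), c ^ inversions ρ) (Nat.add_comm N 1)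
    rw [hcast, key, reps_one_sum, ih, Finset.prod_range_succ, Nat.add_comm 1 N]

end QFormAux

/-! ### Analytic lemmas -/

section Analytic

variable {q : ℝ}

lemma qInt_pos (hq1 : -1 < q) (hq2 : q < 1) (N : ℕ) : 0 < qInt q (N + 1) := by
  have habs : |q| < 1 := abs_lt.mpr ⟨hq1, hq2⟩
  have hpow : q ^ (N + 1) < 1 := by
    calc q ^ (N + 1) ≤ |q ^ (N + 1)| := le_abs_self _
    _ = |q| ^ (N + 1) := abs_pow q _
    _ < 1 := pow_lt_one₀ (abs_nonneg q) habs (Nat.succ_ne_zero N)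
  have hgeom : qInt q (N + 1) * (q - 1) = q ^ (N + 1) - 1 := geom_sum_mul q (N + 1)
  nlinarith [hgeom]

lemma qFact_pos (hq1 : -1 < q) (hq2 : q < 1) (m : ℕ) : 0 < qFact q m :=
  Finset.prod_pos fun k _ => qInt_pos hq1 hq2 k

lemma qInt_nonneg {x : ℝ} (hx : 0 ≤ x) (N : ℕ) : 0 ≤ qInt x N :=
  Finset.sum_nonneg fun i _ => pow_nonneg hx i

lemma qInt_le_inv {x : ℝ} (hx0 : 0 ≤ x) (hx1 : x < 1) (N : ℕ) : qInt x N ≤ (1 - x)⁻¹ := by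
  have h1 : (0:ℝ) < 1 - x := by linarith
  have hgeom : qInt x N * (x - 1) = x ^ N - 1 := geom_sum_mul x N
  have hxN : 0 ≤ x ^ N := pow_nonneg hx0 N
  have hinv : (1 - x)⁻¹ * (1 - x) = 1 := inv_mul_cancel₀ (ne_of_gt h1)
  nlinarith [hgeom, hinv]

lemma Cq_multipliable (hq1 : -1 < q) (hq2 : q < 1) :
    Multipliable fun i : ℕ => (1 - |q| ^ (i + 1))⁻¹ := by
  set x := |q| with hx
  have hx0 : 0 ≤ x := abs_nonneg q
  have hx1 : x < 1 := abs_lt.mpr ⟨hq1, hq2⟩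
  have h1 : (0:ℝ) < 1 - x := by linarith
  have hpos : ∀ i : ℕ, 0 < 1 - x ^ (i + 1) := by
    intro i
    have : x ^ (i + 1) < 1 := pow_lt_one₀ hx0 hx1 (Nat.succ_ne_zero i)
    linarith
  have hsum : Summable fun i : ℕ => Real.log ((1 - x ^ (i + 1))⁻¹) := by
    apply Summable.of_nonneg_of_le
      (fun i => Real.log_nonneg ((one_le_inv₀ (hpos i)).mpr (by nlinarith [pow_nonneg hx0 (i + 1)])))
      (fun i => ?_) ((summable_geometric_of_lt_one hx0 hx1).mul_left ((1 - x)⁻¹ * x))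
    have hyx : x ^ (i + 1) ≤ x := by
      calc x ^ (i + 1) ≤ x ^ 1 := pow_le_pow_of_le_one hx0 hx1.le (by omega)
      _ = x := pow_one x
    have hlog := Real.log_le_sub_one_of_pos (inv_pos.mpr (hpos i))
    have hzy : (1 - x ^ (i + 1))⁻¹ * (1 - x ^ (i + 1)) = 1 :=
      inv_mul_cancel₀ (ne_of_gt (hpos i))
    have key : (1 - x ^ (i + 1))⁻¹ - 1 ≤ (1 - x)⁻¹ * x * x ^ i := by
      have hxx : x * x ^ i = x ^ (i + 1) := (pow_succ' x i).symm
      have hy0 : 0 ≤ x ^ (i + 1) := pow_nonneg hx0 _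
      have hzle : (1 - x ^ (i + 1))⁻¹ ≤ (1 - x)⁻¹ := inv_anti₀ h1 (by linarith)
      have hz1 : (1 - x ^ (i + 1))⁻¹ - 1 = (1 - x ^ (i + 1))⁻¹ * x ^ (i + 1) := by
        linear_combination hzy
      rw [mul_assoc, hxx, hz1]
      exact mul_le_mul_of_nonneg_right hzle hy0
    linarith
  have h2 := hsum.hasSum.rexp
  have h3 : (fun i : ℕ => Real.exp (Real.log ((1 - x ^ (i + 1))⁻¹)))
      = fun i : ℕ => (1 - x ^ (i + 1))⁻¹ :=
    funext fun i => Real.exp_log (inv_pos.mpr (hpos i))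
  rw [Function.comp_def, h3] at h2
  exact ⟨_, h2⟩

lemma one_lt_aux (hq1 : -1 < q) (hq2 : q < 1) : ∀ i : ℕ, 1 ≤ (1 - |q| ^ (i + 1))⁻¹ := by
  intro i
  have hx0 : 0 ≤ |q| := abs_nonneg q
  have hx1 : |q| < 1 := abs_lt.mpr ⟨hq1, hq2⟩
  have : |q| ^ (i + 1) < 1 := pow_lt_one₀ hx0 hx1 (Nat.succ_ne_zero i)
  exact (one_le_inv₀ (by linarith)).mpr (by nlinarith [pow_nonneg hx0 (i + 1)])

lemma inv_le_Cq (hq1 : -1 < q) (hq2 : q < 1) : (1 - |q|)⁻¹ ≤ Cq q := by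
  have hm := (Cq_multipliable hq1 hq2).hasProd
  have hmain : (1 - |q| ^ (0 + 1))⁻¹ ≤ Cq q := by
    refine ge_of_tendsto hm ?_
    filter_upwards [Filter.eventually_ge_atTop ({0} : Finset ℕ)] with s hs
    have h0s : (0 : ℕ) ∈ s := hs (Finset.mem_singleton_self 0)
    have hgle : ∏ j ∈ s, (if j = 0 then (1 - |q| ^ (0 + 1))⁻¹ else 1)
        ≤ ∏ j ∈ s, (1 - |q| ^ (j + 1))⁻¹ := by
      apply Finset.prod_le_prod
      · intro i _
        split
        · exact le_trans zero_le_one (one_lt_aux hq1 hq2 0)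
        · norm_num
      · intro i _
        split
        · rename_i h; subst h; exact le_refl _
        · exact one_lt_aux hq1 hq2 i
    calc (1 - |q| ^ (0 + 1))⁻¹
        = ∏ j ∈ s, (if j = 0 then (1 - |q| ^ (0 + 1))⁻¹ else 1) := by
          rw [Finset.prod_ite_eq' s 0 (fun _ => (1 - |q| ^ (0 + 1))⁻¹), if_pos h0s]
      _ ≤ ∏ j ∈ s, (1 - |q| ^ (j + 1))⁻¹ := hgle
  simpa using hmain

lemma one_le_Cq (hq1 : -1 < q) (hq2 : q < 1) : 1 ≤ Cq q := by
  refine le_trans ?_ (inv_le_Cq hq1 hq2)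
  have hx1 : |q| < 1 := abs_lt.mpr ⟨hq1, hq2⟩
  exact (one_le_inv₀ (by linarith)).mpr (by nlinarith [abs_nonneg q])

end Analytic

open QFormAux Finset

theorem qForm_word_norm_bound {H : Type*} [NormedAddCommGroup H] [InnerProductSpace ℂ H]
    (q : ℝ) (hq : -1 < q ∧ q < 1) (n m : ℕ) (f : Fin n → H) (e : H)
    (hf : ∀ i, ‖f i‖ = 1) (he : ‖e‖ = 1)
    (w : Fin (n + m) → H) (hw : w = Fin.append f fun _ : Fin m => e) :
    qForm q w w ≤ ((Cq q ^ n * qFact q m : ℝ) : ℂ) := by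
  obtain ⟨hq1, hq2⟩ := hq
  set x := |q| with hxdef
  have hx0 : 0 ≤ x := abs_nonneg q
  have hx1 : x < 1 := abs_lt.mpr ⟨hq1, hq2⟩
  set P : Equiv.Perm (Fin (n + m)) → ℂ := fun ρ => ∏ i, (inner ℂ (w i) (w (ρ i)) : ℂ) with hPdef
  -- `w` is invariant under `embPerm`
  have hwemb : ∀ (τ : Equiv.Perm (Fin m)) (i : Fin (n + m)), w (embPerm n m τ i) = w i := by
    intro τ i
    induction i using Fin.addCases with
    | left i => rw [embPerm_castAdd]
    | right i =>
      rw [embPerm_natAdd, hw, Fin.append_right, Fin.append_right]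
  have hP : ∀ ρ τ, P (ρ * embPerm n m τ) = P ρ := by
    intro ρ τ
    rw [hPdef]
    calc (∏ i, (inner ℂ (w i) (w ((ρ * embPerm n m τ) i)) : ℂ))
        = ∏ i, (fun j => (inner ℂ (w j) (w (ρ j)) : ℂ)) (embPerm n m τ i) := by
          apply Finset.prod_congr rfl
          intro i _
          simp only [Equiv.Perm.mul_apply]
          rw [← hwemb τ i]
      _ = ∏ i, (inner ℂ (w i) (w (ρ i)) : ℂ) :=
          Equiv.prod_comp (embPerm n m τ) (fun j => (inner ℂ (w j) (w (ρ j)) : ℂ))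
  -- the decomposition
  have hdecomp : qForm q w w =
      ((qFact q m : ℝ) : ℂ) * ∑ σ ∈ reps n m, (q : ℂ) ^ inversions σ * P σ := by
    rw [qForm, sum_pow_mul_decompose (q : ℂ) P hP]
    congr 1
    rw [sum_pow_inversions]
    rw [qFact]
    push_cast
    apply Finset.prod_congr rfl
    intro k _
    rw [qInt]
    push_cast
    rfl
  -- norms of the vectors
  have hwnorm : ∀ i, ‖w i‖ = 1 := by
    intro i
    induction i using Fin.addCases with
    | left i => rw [hw, Fin.append_left]; exact hf i
    | right i => rw [hw, Fin.append_right]; exact he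
  have hPbound : ∀ ρ, ‖P ρ‖ ≤ 1 := by
    intro ρ
    rw [hPdef]
    calc ‖∏ i, (inner ℂ (w i) (w (ρ i)) : ℂ)‖ = ∏ i, ‖(inner ℂ (w i) (w (ρ i)) : ℂ)‖ := by
          rw [norm_prod]
      _ ≤ 1 := by
          apply Finset.prod_le_one
          · intro i _; exact norm_nonneg _
          · intro i _
            calc ‖(inner ℂ (w i) (w (ρ i)) : ℂ)‖ ≤ ‖w i‖ * ‖w (ρ i)‖ := norm_inner_le_norm _ _
              _ = 1 := by rw [hwnorm, hwnorm, mul_one]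
  -- imaginary part is zero
  have hreal : (qForm q w w).im = 0 := by
    rw [← Complex.conj_eq_iff_im]
    rw [qForm, map_sum]
    calc ∑ ρ : Equiv.Perm (Fin (n + m)),
          (starRingEnd ℂ) ((q : ℂ) ^ inversions ρ * ∏ i, (inner ℂ (w i) (w (ρ i)) : ℂ))
        = ∑ ρ : Equiv.Perm (Fin (n + m)),
            (q : ℂ) ^ inversions ρ⁻¹ * ∏ i, (inner ℂ (w i) (w (ρ⁻¹ i)) : ℂ) := by
          apply Finset.sum_congr rfl
          intro ρ _
          rw [map_mul, map_pow, Complex.conj_ofReal, map_prod, inversions_inv]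
          congr 1
          calc ∏ i, (starRingEnd ℂ) (inner ℂ (w i) (w (ρ i)) : ℂ)
              = ∏ i, (inner ℂ (w (ρ i)) (w i) : ℂ) := by
                apply Finset.prod_congr rfl
                intro i _
                exact inner_conj_symm _ _
            _ = ∏ i, (fun j => (inner ℂ (w (ρ j)) (w j) : ℂ)) (ρ⁻¹ i) :=
                (Equiv.prod_comp (ρ⁻¹ : Equiv.Perm (Fin (n + m)))
                  (fun j => (inner ℂ (w (ρ j)) (w j) : ℂ))).symm
            _ = ∏ i, (inner ℂ (w i) (w (ρ⁻¹ i)) : ℂ) := by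
                apply Finset.prod_congr rfl
                intro i _
                simp only [Equiv.Perm.coe_inv, Equiv.apply_symm_apply]
      _ = ∑ ρ : Equiv.Perm (Fin (n + m)),
            (q : ℂ) ^ inversions ρ * ∏ i, (inner ℂ (w i) (w (ρ i)) : ℂ) := by
          apply Fintype.sum_bijective (fun ρ : Equiv.Perm (Fin (n + m)) => ρ⁻¹)
            (Function.Involutive.bijective (fun ρ => inv_inv ρ))
          intro ρ
          rfl
  -- the sum over representatives, real bound
  set T : ℝ := ∑ σ ∈ reps n m, x ^ inversions σ with hTdef
  have hT : qFact x m * T = qFact x (n + m) := by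
    have key := sum_pow_mul_decompose (n := n) (m := m) x (fun _ => (1 : ℝ)) (fun _ _ => rfl)
    simp only [mul_one] at key
    rw [← hTdef] at key
    have hsm : (∑ τ : Equiv.Perm (Fin m), x ^ inversions τ) = qFact x m := by
      rw [sum_pow_inversions]
      simp only [qFact, qInt]
    have hsnm : (∑ ρ : Equiv.Perm (Fin (n + m)), x ^ inversions ρ) = qFact x (n + m) := by
      rw [sum_pow_inversions]
      simp only [qFact, qInt]
    rw [← hsm, ← key]
    exact hsnm
  have hTval : T = ∏ k ∈ Finset.range n, qInt x (m + k + 1) := by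
    have hsplit : qFact x (n + m) = qFact x m * ∏ k ∈ Finset.range n, qInt x (m + k + 1) := by
      rw [Nat.add_comm n m, qFact, Finset.prod_range_add, ← qFact]
    rw [hsplit] at hT
    exact mul_left_cancel₀ (ne_of_gt (qFact_pos (by linarith) hx1 m)) hT
  have hTbound : T ≤ Cq q ^ n := by
    rw [hTval]
    calc ∏ k ∈ Finset.range n, qInt x (m + k + 1)
        ≤ ∏ _k ∈ Finset.range n, Cq q := by
          apply Finset.prod_le_prod
          · intro k _; exact qInt_nonneg hx0 _
          · intro k _
            exact le_trans (qInt_le_inv hx0 hx1 _) (inv_le_Cq hq1 hq2)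
      _ = Cq q ^ n := by rw [Finset.prod_const, Finset.card_range]
  -- assembling
  have hfq : 0 ≤ qFact q m := le_of_lt (qFact_pos hq1 hq2 m)
  have hnormS : ‖∑ σ ∈ reps n m, (q : ℂ) ^ inversions σ * P σ‖ ≤ T := by
    calc ‖∑ σ ∈ reps n m, (q : ℂ) ^ inversions σ * P σ‖
        ≤ ∑ σ ∈ reps n m, ‖(q : ℂ) ^ inversions σ * P σ‖ := norm_sum_le _ _
      _ ≤ ∑ σ ∈ reps n m, x ^ inversions σ := by
          apply Finset.sum_le_sum
          intro σ _
          rw [norm_mul, norm_pow, Complex.norm_real, Real.norm_eq_abs]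
          calc |q| ^ inversions σ * ‖P σ‖ ≤ |q| ^ inversions σ * 1 := by
                apply mul_le_mul_of_nonneg_left (hPbound σ) (pow_nonneg (abs_nonneg q) _)
            _ = x ^ inversions σ := by rw [mul_one]
      _ = T := rfl
  have hre : (qForm q w w).re ≤ Cq q ^ n * qFact q m := by
    calc (qForm q w w).re ≤ ‖qForm q w w‖ := Complex.re_le_norm _
      _ = ‖((qFact q m : ℝ) : ℂ)‖ * ‖∑ σ ∈ reps n m, (q : ℂ) ^ inversions σ * P σ‖ := by
          rw [hdecomp, norm_mul]
      _ = qFact q m * ‖∑ σ ∈ reps n m, (q : ℂ) ^ inversions σ * P σ‖ := by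
          rw [Complex.norm_real, Real.norm_eq_abs, abs_of_nonneg hfq]
      _ ≤ qFact q m * T := mul_le_mul_of_nonneg_left hnormS hfq
      _ ≤ qFact q m * Cq q ^ n := mul_le_mul_of_nonneg_left hTbound hfq
      _ = Cq q ^ n * qFact q m := mul_comm _ _
  rw [Complex.le_def]
  constructor
  · rw [Complex.ofReal_re]
    exact hre
  · rw [Complex.ofReal_im]
    exact hreal
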